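/- Let H be a visit subgraph with kernel nodes u and v, and suppose P_H(u) < P_H(v)/(1+ε). Then there exists a graph G compatible with H in which P(v) > (1+ε)·P(u); in particular H is not a ranking subgraph for u ≻ v. The graph G is obtained from H by adding N new sink nodes each pointed to by every frontier node of H, for N sufficiently large. -/

import Mathlib

open scoped Classical BigOperators

/-- Out-degree of `z` in the directed graph with arc relation `A`. -/
noncomputable def outDeg {V : Type*} [Fintype V] (A : V → V → Prop) (z : V) : ℕ :=
  (Finset.univ.filter fun w => A z w).card

/-- Random-surfer one-step transition matrix (rows of dangling nodes are zero). -/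
noncomputable def stepM {V : Type*} [Fintype V] (A : V → V → Prop) : Matrix V V ℝ :=
  fun z w => if A z w then 1 / (outDeg A z : ℝ) else 0

/-- PageRank contribution of `z` to `v`:
`P(z,v) = (1-α)/n · Σ_τ α^τ · inf_τ(z,v)` where `inf_τ(z,v) = (M^τ) z v`. -/
noncomputable def contrib {V : Type*} [Fintype V] (α : ℝ) (A : V → V → Prop) (z v : V) : ℝ :=
  (1 - α) / (Fintype.card V : ℝ) * ∑' τ : ℕ, α ^ τ * (stepM A ^ τ) z v

/-- PageRank score of `v` with damping factor `α`. -/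
noncomputable def pagerank {V : Type*} [Fintype V] (α : ℝ) (A : V → V → Prop) (v : V) : ℝ :=
  (1 - α) / (Fintype.card V : ℝ) * ∑' τ : ℕ, α ^ τ * ∑ z, (stepM A ^ τ) z v

structure VisitSub (V : Type*) where
  verts : Set V
  arcs : V → V → Prop
  kernel : Set V

def VisitSub.IsVisit {V : Type*} (H : VisitSub V) : Prop :=
  H.kernel ⊆ H.verts ∧
  (∀ x y, H.arcs x y → x ∈ H.verts ∧ y ∈ H.verts) ∧
  (∀ x ∈ H.verts \ H.kernel, ∃ y ∈ H.kernel, H.arcs x y ∨ H.arcs y x) ∧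
  (∀ x y, H.arcs x y → x ∈ H.kernel ∨ y ∈ H.kernel)

def VisitSub.union {V : Type*} (H1 H2 : VisitSub V) : VisitSub V :=
  ⟨H1.verts ∪ H2.verts, fun x y => H1.arcs x y ∨ H2.arcs x y, H1.kernel ∪ H2.kernel⟩

def VisitSub.Compatible {V : Type*} (H : VisitSub V) (G : V → V → Prop) : Prop :=
  (∀ x y, H.arcs x y → G x y) ∧
  (∀ x y, x ∈ H.kernel ∨ y ∈ H.kernel → (G x y ↔ H.arcs x y))

/-- Out-degree inside the visit subgraph `H`. -/
noncomputable def VisitSub.outDegH {V : Type*} [Fintype V] (H : VisitSub V) (z : V) : ℕ :=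
  (Finset.univ.filter fun w => H.arcs z w).card

/-- Transition matrix restricted to kernel-only steps of `H`. -/
noncomputable def VisitSub.kerM {V : Type*} [Fintype V] (H : VisitSub V) : Matrix V V ℝ :=
  fun z w => if z ∈ H.kernel ∧ w ∈ H.kernel ∧ H.arcs z w then 1 / (H.outDegH z : ℝ) else 0

/-- Kernel contribution `P_H(z,v)`: PageRank contribution of `z` to `v` through paths whose
nodes all lie in the kernel of `H`, with restart probability `1/|H|`. -/
noncomputable def VisitSub.kernelContrib {V : Type*} [Fintype V]
    (α : ℝ) (H : VisitSub V) (z v : V) : ℝ :=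
  (1 - α) / (H.verts.ncard : ℝ) * ∑' τ : ℕ, α ^ τ * (H.kerM ^ τ) z v

/-- Kernel score `P_H(v) = Σ_z P_H(z,v)`. -/
noncomputable def VisitSub.kernelScore {V : Type*} [Fintype V]
    (α : ℝ) (H : VisitSub V) (v : V) : ℝ :=
  ∑ z, H.kernelContrib α z v

/-- `u` ranks strictly above `v` (beyond the `ε`-tie-threshold) in the graph `G`. -/
def RankAbove {V : Type*} [Fintype V] (α ε : ℝ) (G : V → V → Prop) (u v : V) : Prop :=
  pagerank α G u > (1 + ε) * pagerank α G v

/-- `H` is a ranking subgraph for `u, v`: both are kernel nodes and no two graphs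
compatible with `H` rank them in opposite (strict) ways. -/
def VisitSub.IsRankingPair {V : Type*} [Fintype V]
    (α ε : ℝ) (H : VisitSub V) (u v : V) : Prop :=
  u ∈ H.kernel ∧ v ∈ H.kernel ∧
  ¬ ∃ G G' : V → V → Prop, H.Compatible G ∧ H.Compatible G' ∧
      RankAbove α ε G u v ∧ RankAbove α ε G' v u

/-- Image of a visit subgraph under an injection into a larger vertex universe. -/
def VisitSub.map {V W : Type*} (f : V → W) (H : VisitSub V) : VisitSub W :=
  ⟨f '' H.verts, fun x y => ∃ a b, H.arcs a b ∧ x = f a ∧ y = f b, f '' H.kernel⟩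

/-- The graph obtained from `H` by adding `N` new sink nodes, each pointed to by every
frontier node of `H`. -/
def sinkExt {V : Type*} (H : VisitSub V) (N : ℕ) : (V ⊕ Fin N) → (V ⊕ Fin N) → Prop :=
  fun x y =>
    (∃ a b, H.arcs a b ∧ x = Sum.inl a ∧ y = Sum.inl b) ∨
    (∃ a, ∃ s : Fin N, a ∈ H.verts \ H.kernel ∧ x = Sum.inl a ∧ y = Sum.inr s)

section aux
set_option linter.unusedSectionVars false

variable {V : Type*} [Fintype V] [DecidableEq V]

lemma stepM_nonneg (A : V → V → Prop) (z w : V) : 0 ≤ stepM A z w := by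
  unfold stepM; split <;> positivity

lemma stepM_rowsum_le (A : V → V → Prop) (z : V) : ∑ w, stepM A z w ≤ 1 := by
  unfold stepM
  rw [Finset.sum_ite, Finset.sum_const_zero, add_zero, Finset.sum_const, nsmul_eq_mul]
  rcases Nat.eq_zero_or_pos (outDeg A z) with h | h
  · simp [outDeg] at h ⊢
    simp [h]
  · have : ((Finset.univ.filter fun w => A z w).card : ℝ) = (outDeg A z : ℝ) := by
      simp [outDeg]
    rw [this, mul_one_div, div_self (by positivity)]

lemma pow_entry_nonneg {P : Matrix V V ℝ} (h0 : ∀ z w, 0 ≤ P z w) (τ : ℕ) :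
    ∀ z w, 0 ≤ (P ^ τ) z w := by
  induction τ with
  | zero =>
    intro z w; rw [pow_zero, Matrix.one_apply]; split <;> norm_num
  | succ τ ih =>
    intro z w
    rw [pow_succ, Matrix.mul_apply]
    exact Finset.sum_nonneg fun y _ => mul_nonneg (ih z y) (h0 y w)

lemma pow_rowsum_le {P : Matrix V V ℝ} (h0 : ∀ z w, 0 ≤ P z w)
    (h1 : ∀ z, ∑ w, P z w ≤ 1) (τ : ℕ) : ∀ z, ∑ w, (P ^ τ) z w ≤ 1 := by
  induction τ with
  | zero => intro z; simp [Matrix.one_apply]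
  | succ τ ih =>
    intro z
    have : ∑ w, (P ^ (τ+1)) z w = ∑ y, (P ^ τ) z y * ∑ w, P y w := by
      simp only [pow_succ, Matrix.mul_apply]
      rw [Finset.sum_comm]
      exact Finset.sum_congr rfl fun y _ => (Finset.mul_sum _ _ _).symm
    rw [this]
    calc ∑ y, (P ^ τ) z y * ∑ w, P y w ≤ ∑ y, (P ^ τ) z y * 1 :=
          Finset.sum_le_sum fun y _ => by
            exact mul_le_mul_of_nonneg_left (h1 y) (pow_entry_nonneg h0 τ z y)
      _ ≤ 1 := by simpa using ih z

lemma pow_entry_le_one {P : Matrix V V ℝ} (h0 : ∀ z w, 0 ≤ P z w)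
    (h1 : ∀ z, ∑ w, P z w ≤ 1) (τ : ℕ) (z w : V) : (P ^ τ) z w ≤ 1 :=
  le_trans (Finset.single_le_sum (fun y _ => pow_entry_nonneg h0 τ z y) (Finset.mem_univ w))
    (pow_rowsum_le h0 h1 τ z)

lemma pow_entry_mono {P Q : Matrix V V ℝ} (h0 : ∀ z w, 0 ≤ P z w)
    (hle : ∀ z w, P z w ≤ Q z w) (τ : ℕ) :
    ∀ z w, (P ^ τ) z w ≤ (Q ^ τ) z w := by
  induction τ with
  | zero => intro z w; rw [pow_zero, pow_zero]
  | succ τ ih =>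
    intro z w
    rw [pow_succ, pow_succ, Matrix.mul_apply, Matrix.mul_apply]
    refine Finset.sum_le_sum fun y _ => ?_
    exact mul_le_mul (ih z y) (hle y w) (h0 y w) (le_trans (pow_entry_nonneg h0 τ z y) (ih z y))

lemma kerM_nonneg (H : VisitSub V) (z w : V) : 0 ≤ H.kerM z w := by
  unfold VisitSub.kerM; split <;> positivity

lemma kerM_rowsum_le (H : VisitSub V) (z : V) : ∑ w, H.kerM z w ≤ 1 := by
  unfold VisitSub.kerM
  rw [Finset.sum_ite, Finset.sum_const_zero, add_zero, Finset.sum_const, nsmul_eq_mul]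
  rcases Nat.eq_zero_or_pos (H.outDegH z) with h | h
  · simp [h]
  · have hcard : (Finset.univ.filter fun w => z ∈ H.kernel ∧ w ∈ H.kernel ∧ H.arcs z w).card
        ≤ H.outDegH z := by
      apply Finset.card_le_card
      intro w hw
      simp only [Finset.mem_filter, Finset.mem_univ, true_and] at hw ⊢
      exact hw.2.2
    calc ((Finset.univ.filter fun w => z ∈ H.kernel ∧ w ∈ H.kernel ∧ H.arcs z w).card : ℝ)
          * (1 / (H.outDegH z : ℝ)) ≤ (H.outDegH z : ℝ) * (1 / (H.outDegH z : ℝ)) := by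
          apply mul_le_mul_of_nonneg_right (by exact_mod_cast hcard) (by positivity)
      _ = 1 := by rw [mul_one_div, div_self (by positivity)]

end aux

section aux2
set_option linter.unusedSectionVars false

variable {V : Type*} [Fintype V] [DecidableEq V]

lemma sinkExt_inr (H : VisitSub V) (N : ℕ) (s : Fin N) (w : V ⊕ Fin N) :
    ¬ sinkExt H N (Sum.inr s) w := by
  rintro (⟨a, b, _, h, _⟩ | ⟨a, s', _, h, _⟩) <;> exact Sum.inr_ne_inl h

lemma sinkExt_inl_inl (H : VisitSub V) (N : ℕ) (a b : V) :
    sinkExt H N (Sum.inl a) (Sum.inl b) ↔ H.arcs a b := by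
  constructor
  · rintro (⟨a', b', harc, ha, hb⟩ | ⟨a', s', _, _, hb⟩)
    · rw [Sum.inl.injEq] at ha hb; rw [ha, hb]; exact harc
    · exact absurd hb Sum.inl_ne_inr
  · intro h; exact Or.inl ⟨a, b, h, rfl, rfl⟩

lemma sinkExt_inl_inr (H : VisitSub V) (N : ℕ) (a : V) (s : Fin N) :
    sinkExt H N (Sum.inl a) (Sum.inr s) ↔ a ∈ H.verts \ H.kernel := by
  constructor
  · rintro (⟨a', b', _, _, hb⟩ | ⟨a', s', hmem, ha, _⟩)
    · exact absurd hb.symm Sum.inl_ne_inr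
    · rw [Sum.inl.injEq] at ha; rw [ha]; exact hmem
  · intro h; exact Or.inr ⟨a, s, h, rfl, rfl⟩

lemma stepM_sink_inr (H : VisitSub V) (N : ℕ) (s : Fin N) (w : V ⊕ Fin N) :
    stepM (sinkExt H N) (Sum.inr s) w = 0 := by
  unfold stepM; rw [if_neg (sinkExt_inr H N s w)]

lemma outDeg_sink_kernel (H : VisitSub V) (N : ℕ) {a : V} (ha : a ∈ H.kernel) :
    outDeg (sinkExt H N) (Sum.inl a) = H.outDegH a := by
  unfold outDeg VisitSub.outDegH
  rw [show (Finset.univ.filter fun w => sinkExt H N (Sum.inl a) w)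
      = (Finset.univ.filter fun b => H.arcs a b).map ⟨Sum.inl, Sum.inl_injective⟩ from ?_,
    Finset.card_map]
  ext w
  cases w with
  | inl b =>
    simp [sinkExt_inl_inl]
  | inr s =>
    simp only [Finset.mem_filter, Finset.mem_univ, true_and, Finset.mem_map,
      Function.Embedding.coeFn_mk]
    constructor
    · intro h
      exact absurd ha ((sinkExt_inl_inr H N a s).1 h).2
    · rintro ⟨b, _, hb⟩; exact absurd hb Sum.inl_ne_inr

lemma outDeg_sink_frontier (H : VisitSub V) (N : ℕ) {a : V} (ha : a ∈ H.verts \ H.kernel) :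
    N ≤ outDeg (sinkExt H N) (Sum.inl a) := by
  unfold outDeg
  calc N = ((Finset.univ : Finset (Fin N)).map ⟨Sum.inr, Sum.inr_injective⟩).card := by
        simp
    _ ≤ _ := by
        apply Finset.card_le_card
        intro w hw
        simp only [Finset.mem_map, Finset.mem_univ, true_and, Function.Embedding.coeFn_mk] at hw
        obtain ⟨s, rfl⟩ := hw
        simp only [Finset.mem_filter, Finset.mem_univ, true_and]
        exact (sinkExt_inl_inr H N a s).2 ha

lemma stepM_sink_kernel (H : VisitSub V) (N : ℕ) {a : V} (ha : a ∈ H.kernel) (b : V) :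
    stepM (sinkExt H N) (Sum.inl a) (Sum.inl b)
      = if H.arcs a b then 1 / (H.outDegH a : ℝ) else 0 := by
  unfold stepM
  rw [outDeg_sink_kernel H N ha]
  simp [sinkExt_inl_inl]

/-- The kernel matrix embedded into the extended vertex set. -/
noncomputable def Kext (H : VisitSub V) (N : ℕ) : Matrix (V ⊕ Fin N) (V ⊕ Fin N) ℝ :=
  fun z w => match z, w with
  | Sum.inl a, Sum.inl b => H.kerM a b
  | _, _ => 0

lemma Kext_inl_inl (H : VisitSub V) (N : ℕ) (a b : V) :
    Kext H N (Sum.inl a) (Sum.inl b) = H.kerM a b := rfl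

lemma Kext_inr (H : VisitSub V) (N : ℕ) (s : Fin N) (w : V ⊕ Fin N) :
    Kext H N (Sum.inr s) w = 0 := by
  cases w <;> rfl

lemma Kext_inl_inr (H : VisitSub V) (N : ℕ) (a : V) (s : Fin N) :
    Kext H N (Sum.inl a) (Sum.inr s) = 0 := rfl

lemma Kext_nonneg (H : VisitSub V) (N : ℕ) (z w : V ⊕ Fin N) : 0 ≤ Kext H N z w := by
  cases z with
  | inl a => cases w with
    | inl b => rw [Kext_inl_inl]; exact kerM_nonneg H a b
    | inr s => rw [Kext_inl_inr]
  | inr s => rw [Kext_inr]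

lemma Kext_le_stepM (H : VisitSub V) (N : ℕ) (z w : V ⊕ Fin N) :
    Kext H N z w ≤ stepM (sinkExt H N) z w := by
  cases z with
  | inl a => cases w with
    | inl b =>
      rw [Kext_inl_inl]
      unfold VisitSub.kerM
      split
      · next h =>
        rw [stepM_sink_kernel H N h.1, if_pos h.2.2]
      · exact stepM_nonneg _ _ _
    | inr s => rw [Kext_inl_inr]; exact stepM_nonneg _ _ _
  | inr s => rw [Kext_inr]; exact stepM_nonneg _ _ _

lemma Kext_pow_inr (H : VisitSub V) (N : ℕ) [DecidableEq (V ⊕ Fin N)] (τ : ℕ) (s : Fin N) (b : V) :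
    (Kext H N ^ τ) (Sum.inr s) (Sum.inl b) = 0 := by
  induction τ with
  | zero => simp [Matrix.one_apply]
  | succ τ ih =>
    rw [pow_succ', Matrix.mul_apply]
    apply Finset.sum_eq_zero
    intro y _
    rw [Kext_inr, zero_mul]

lemma Kext_pow_inl (H : VisitSub V) (N : ℕ) [DecidableEq (V ⊕ Fin N)] (τ : ℕ) (a b : V) :
    (Kext H N ^ τ) (Sum.inl a) (Sum.inl b) = (H.kerM ^ τ) a b := by
  induction τ generalizing b with
  | zero => simp [Matrix.one_apply]
  | succ τ ih =>
    rw [pow_succ, pow_succ, Matrix.mul_apply, Matrix.mul_apply, Fintype.sum_sum_type]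
    have h2 : ∀ s : Fin N, (Kext H N ^ τ) (Sum.inl a) (Sum.inr s) * Kext H N (Sum.inr s) (Sum.inl b) = 0 := by
      intro s; rw [Kext_inr, mul_zero]
    rw [Finset.sum_congr rfl fun s _ => h2 s, Finset.sum_const_zero, add_zero]
    exact Finset.sum_congr rfl fun c _ => by rw [ih, Kext_inl_inl]

end aux2

section aux3

lemma sum_split {γ : Type*} [Fintype γ] {Kf Ff : Finset γ} (hdisj : Disjoint Kf Ff)
    {g : γ → ℝ} (hg : ∀ a, a ∉ Kf → a ∉ Ff → g a = 0) :
    ∑ a, g a = ∑ a ∈ Kf, g a + ∑ a ∈ Ff, g a := by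
  rw [← Finset.sum_union hdisj]
  refine (Finset.sum_subset (Finset.subset_univ _) ?_).symm
  intro a _ ha
  rw [Finset.mem_union, not_or] at ha
  exact hg a ha.1 ha.2

lemma sum_inl_le_one {V : Type*} [Fintype V] {N : ℕ}
    {P : Matrix (V ⊕ Fin N) (V ⊕ Fin N) ℝ}
    (h0 : ∀ z w, 0 ≤ P z w) (h1 : ∀ z, ∑ w, P z w ≤ 1) (F : Finset V) (y : V ⊕ Fin N) :
    ∑ a ∈ F, P y (Sum.inl a) ≤ 1 := by
  calc ∑ a ∈ F, P y (Sum.inl a)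
      = ∑ w ∈ F.map ⟨Sum.inl, Sum.inl_injective⟩, P y w := by rw [Finset.sum_map]; rfl
    _ ≤ ∑ w, P y w :=
        Finset.sum_le_sum_of_subset_of_nonneg (Finset.subset_univ _) (fun w _ _ => h0 y w)
    _ ≤ 1 := h1 y

lemma summable_entry_aux {V : Type*} [Fintype V] [DecidableEq V] {P : Matrix V V ℝ}
    (h0 : ∀ z w, 0 ≤ P z w) (h1 : ∀ z, ∑ w, P z w ≤ 1)
    {α : ℝ} (hα0 : 0 < α) (hα1 : α < 1) (z w : V) :
    Summable fun τ : ℕ => α ^ τ * (P ^ τ) z w := by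
  apply Summable.of_nonneg_of_le
    (fun τ => mul_nonneg (pow_nonneg hα0.le τ) (pow_entry_nonneg h0 τ z w))
    (fun τ => ?_) (summable_geometric_of_lt_one hα0.le hα1)
  calc α ^ τ * (P ^ τ) z w ≤ α ^ τ * 1 :=
        mul_le_mul_of_nonneg_left (pow_entry_le_one h0 h1 τ z w) (pow_nonneg hα0.le τ)
    _ = α ^ τ := mul_one _

end aux3

set_option maxHeartbeats 1000000 in
/-- If `P_H(u) < P_H(v)/(1+ε)` then, for `N` sufficiently large, the graph obtained from
`H` by adding `N` sinks pointed to by every frontier node is compatible with `H` and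
satisfies `P(v) > (1+ε)·P(u)`; in particular `H` is not a ranking subgraph for `u ≻ v`. -/
theorem stmt_8 {V : Type*} [Fintype V] (α ε : ℝ) (hα : α ∈ Set.Ioo (0:ℝ) 1) (hε : 0 < ε)
    (H : VisitSub V) (hH : H.IsVisit) (u v : V)
    (hu : u ∈ H.kernel) (hv : v ∈ H.kernel)
    (hlt : H.kernelScore α u < H.kernelScore α v / (1 + ε)) :
    ∃ N : ℕ, (H.map (Sum.inl : V → V ⊕ Fin N)).Compatible (sinkExt H N) ∧
      pagerank α (sinkExt H N) (Sum.inl v) > (1 + ε) * pagerank α (sinkExt H N) (Sum.inl u) := by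
  obtain ⟨hα0, hα1⟩ := hα
  have h1α : (0:ℝ) < 1 - α := by linarith
  have hVfin : H.verts.Finite := Set.toFinite _
  have hvertsne : H.verts.Nonempty := ⟨u, hH.1 hu⟩
  set nH : ℝ := (H.verts.ncard : ℝ) with hnHdef
  have hnH0 : 0 < nH := by
    have := (Set.ncard_pos hVfin).mpr hvertsne
    rw [hnHdef]; exact_mod_cast this
  set β : ℝ := (1 + α) / 2 with hβdef
  have hβ0 : (0:ℝ) < β := by rw [hβdef]; linarith
  have hβ1 : β < 1 := by rw [hβdef]; linarith
  have hCsum : Summable fun τ : ℕ => (τ : ℝ) * β ^ τ := by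
    have := summable_pow_mul_geometric_of_norm_lt_one (R := ℝ) 1
      (r := β) (by rw [Real.norm_eq_abs, abs_of_pos hβ0]; exact hβ1)
    simpa using this
  set C : ℝ := ∑' τ : ℕ, (τ : ℝ) * β ^ τ with hCdef
  have hC0 : 0 ≤ C :=
    tsum_nonneg fun τ => mul_nonneg (Nat.cast_nonneg τ) (pow_nonneg hβ0.le τ)
  have hε1 : (0:ℝ) < 1 + ε := by linarith
  set δ : ℝ := H.kernelScore α v - (1+ε) * H.kernelScore α u with hδdef
  have hδ0 : 0 < δ := by
    have h := (lt_div_iff₀ hε1).1 hlt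
    rw [hδdef]; nlinarith
  set N : ℕ := max (⌈2*α*nH/(1-α)⌉₊ + 1) (⌈(1+ε)*(1-α)*nH*C/δ⌉₊ + 1) with hNdef
  have hN1 : 1 ≤ N := le_trans (Nat.le_add_left 1 _) (le_max_left _ _)
  have hN0 : (0:ℝ) < N := by exact_mod_cast Nat.lt_of_lt_of_le Nat.zero_lt_one hN1
  have hNA : α * (1 + nH / N) ≤ β := by
    have h1 : 2*α*nH/(1-α) ≤ (N:ℝ) := by
      calc 2*α*nH/(1-α) ≤ (⌈2*α*nH/(1-α)⌉₊ : ℝ) := Nat.le_ceil _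
        _ ≤ (N:ℝ) := by
            exact_mod_cast le_trans (Nat.le_succ _) (le_max_left _ _)
    have h2 : 2*α*nH ≤ (1-α) * N := by rw [div_le_iff₀ h1α] at h1; linarith
    have h3 : α * nH / N ≤ (1-α)/2 := by
      rw [div_le_div_iff₀ hN0 (by norm_num : (0:ℝ) < 2)]; linarith
    have h4 : α * (1 + nH / N) = α + α * nH / N := by ring
    rw [h4, hβdef]; linarith
  have hNB : (1+ε)*(1-α)*nH*C/N < δ := by
    have h1 : (1+ε)*(1-α)*nH*C/δ < (N:ℝ) := by
      calc (1+ε)*(1-α)*nH*C/δ ≤ (⌈(1+ε)*(1-α)*nH*C/δ⌉₊:ℝ) := Nat.le_ceil _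
        _ < (N:ℝ) := by
            exact_mod_cast Nat.lt_of_lt_of_le (Nat.lt_succ_self _) (le_max_right _ _)
    rw [div_lt_iff₀ hδ0] at h1
    rw [div_lt_iff₀ hN0]
    nlinarith
  refine ⟨N, ⟨?_, ?_⟩, ?_⟩
  · rintro x y ⟨a, b, harc, rfl, rfl⟩
    exact Or.inl ⟨a, b, harc, rfl, rfl⟩
  · rintro x y hxy
    constructor
    · rintro (⟨a, b, harc, rfl, rfl⟩ | ⟨a, s, hmem, rfl, rfl⟩)
      · exact ⟨a, b, harc, rfl, rfl⟩
      · exfalso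
        rcases hxy with ⟨k, hk, hEq⟩ | ⟨k, hk, hEq⟩
        · rw [Sum.inl.injEq] at hEq; rw [← hEq] at hmem; exact hmem.2 hk
        · exact Sum.inl_ne_inr hEq
    · rintro ⟨a, b, harc, rfl, rfl⟩
      exact Or.inl ⟨a, b, harc, rfl, rfl⟩
  · letI : DecidableEq (V ⊕ Fin N) := fun a b => Classical.propDecidable _
    have hne : Nonempty (V ⊕ Fin N) := ⟨Sum.inl u⟩
    set M : Matrix (V ⊕ Fin N) (V ⊕ Fin N) ℝ := stepM (sinkExt H N) with hMdef
    set K : Matrix (V ⊕ Fin N) (V ⊕ Fin N) ℝ := Kext H N with hKdef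
    have hM0 : ∀ z w, 0 ≤ M z w := stepM_nonneg _
    have hM1 : ∀ z, ∑ w, M z w ≤ 1 := stepM_rowsum_le _
    have hK0 : ∀ z w, 0 ≤ K z w := Kext_nonneg H N
    have hKle : ∀ z w, K z w ≤ M z w := Kext_le_stepM H N
    have hK1 : ∀ z, ∑ w, K z w ≤ 1 := fun z =>
      le_trans (Finset.sum_le_sum fun w _ => hKle z w) (hM1 z)
    have hpow : ∀ τ z w, (K ^ τ) z w ≤ (M ^ τ) z w := fun τ => pow_entry_mono hK0 hKle τ
    have hMp0 : ∀ τ z w, 0 ≤ (M ^ τ) z w := fun τ => pow_entry_nonneg hM0 τ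
    have hMple1 : ∀ τ z w, (M ^ τ) z w ≤ 1 := fun τ => pow_entry_le_one hM0 hM1 τ
    set Kf : Finset V := Finset.univ.filter (· ∈ H.kernel) with hKfdef
    set Ff : Finset V := Finset.univ.filter (· ∈ H.verts \ H.kernel) with hFfdef
    have hdisj : Disjoint Kf Ff := by
      rw [Finset.disjoint_left]
      intro a ha hb
      simp only [hKfdef, hFfdef, Finset.mem_filter, Finset.mem_univ, true_and] at ha hb
      exact hb.2 ha
    have hKfcard : (Kf.card : ℝ) ≤ nH := by
      have hsub : Kf ⊆ hVfin.toFinset := by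
        intro a ha
        simp only [hKfdef, Finset.mem_filter, Finset.mem_univ, true_and] at ha
        rw [Set.Finite.mem_toFinset]
        exact hH.1 ha
      have h2 := Finset.card_le_card hsub
      rw [hnHdef, Set.ncard_eq_toFinset_card _ hVfin]
      exact_mod_cast h2
    have hFfcard : (Ff.card : ℝ) ≤ nH := by
      have hsub : Ff ⊆ hVfin.toFinset := by
        intro a ha
        simp only [hFfdef, Finset.mem_filter, Finset.mem_univ, true_and] at ha
        rw [Set.Finite.mem_toFinset]
        exact ha.1
      have h2 := Finset.card_le_card hsub
      rw [hnHdef, Set.ncard_eq_toFinset_card _ hVfin]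
      exact_mod_cast h2
    set cM : ℕ → (V ⊕ Fin N) → ℝ := fun τ w => ∑ z, (M ^ τ) z w with hcM
    set cK : ℕ → (V ⊕ Fin N) → ℝ := fun τ w => ∑ z, (K ^ τ) z w with hcK
    have hcM0 : ∀ τ w, 0 ≤ cM τ w := fun τ w => Finset.sum_nonneg fun z _ => hMp0 τ z w
    have hcMK : ∀ τ w, cK τ w ≤ cM τ w := fun τ w => Finset.sum_le_sum fun z _ => hpow τ z w
    have hcMzero : ∀ w, cM 0 w = 1 := by
      intro w
      simp only [hcM, pow_zero, Matrix.one_apply]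
      rw [Finset.sum_ite_eq' Finset.univ w fun _ => (1:ℝ)]
      simp
    have hcKzero : ∀ w, cK 0 w = 1 := by
      intro w
      simp only [hcK, pow_zero, Matrix.one_apply]
      rw [Finset.sum_ite_eq' Finset.univ w fun _ => (1:ℝ)]
      simp
    have hrecM : ∀ τ w, cM (τ+1) w = ∑ y, cM τ y * M y w := by
      intro τ w
      simp only [hcM, pow_succ, Matrix.mul_apply]
      rw [Finset.sum_comm]
      exact Finset.sum_congr rfl fun y _ => (Finset.sum_mul _ _ _).symm
    have hrecK : ∀ τ w, cK (τ+1) w = ∑ y, cK τ y * K y w := by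
      intro τ w
      simp only [hcK, pow_succ, Matrix.mul_apply]
      rw [Finset.sum_comm]
      exact Finset.sum_congr rfl fun y _ => (Finset.sum_mul _ _ _).symm
    have hredM : ∀ (c : (V ⊕ Fin N) → ℝ) w,
        ∑ y, c y * M y w = ∑ a : V, c (Sum.inl a) * M (Sum.inl a) w := by
      intro c w
      rw [Fintype.sum_sum_type]
      have h2 : ∀ s : Fin N, c (Sum.inr s) * M (Sum.inr s) w = 0 := by
        intro s; rw [hMdef, stepM_sink_inr, mul_zero]
      rw [Finset.sum_congr rfl fun s _ => h2 s, Finset.sum_const_zero, add_zero]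
    have hredK : ∀ (c : (V ⊕ Fin N) → ℝ) w,
        ∑ y, c y * K y w = ∑ a : V, c (Sum.inl a) * K (Sum.inl a) w := by
      intro c w
      rw [Fintype.sum_sum_type]
      have h2 : ∀ s : Fin N, c (Sum.inr s) * K (Sum.inr s) w = 0 := by
        intro s; rw [hKdef, Kext_inr, mul_zero]
      rw [Finset.sum_congr rfl fun s _ => h2 s, Finset.sum_const_zero, add_zero]
    have hMvanish : ∀ (a b : V), a ∉ Kf → a ∉ Ff → M (Sum.inl a) (Sum.inl b) = 0 := by
      intro a b haK haF
      have hns : ¬ sinkExt H N (Sum.inl a) (Sum.inl b) := by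
        rw [sinkExt_inl_inl]
        intro harc
        have hav := (hH.2.1 a b harc).1
        simp only [hKfdef, Finset.mem_filter, Finset.mem_univ, true_and] at haK
        simp only [hFfdef, Finset.mem_filter, Finset.mem_univ, true_and] at haF
        exact haF ⟨hav, haK⟩
      rw [hMdef]
      unfold stepM
      rw [if_neg hns]
    have hKvanish : ∀ (a : V) w, a ∉ Kf → K (Sum.inl a) w = 0 := by
      intro a w haK
      simp only [hKfdef, Finset.mem_filter, Finset.mem_univ, true_and] at haK
      cases w with
      | inl b =>
        rw [hKdef, Kext_inl_inl]
        unfold VisitSub.kerM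
        rw [if_neg (fun h => haK h.1)]
      | inr s => rw [hKdef, Kext_inl_inr]
    have hMfront : ∀ (a f : V), f ∈ Ff → a ∉ Kf → M (Sum.inl a) (Sum.inl f) = 0 := by
      intro a f hf haK
      have hfm : f ∈ H.verts \ H.kernel := by
        simpa only [hFfdef, Finset.mem_filter, Finset.mem_univ, true_and] using hf
      simp only [hKfdef, Finset.mem_filter, Finset.mem_univ, true_and] at haK
      have hns : ¬ sinkExt H N (Sum.inl a) (Sum.inl f) := by
        rw [sinkExt_inl_inl]
        intro harc
        rcases hH.2.2.2 a f harc with h | h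
        · exact haK h
        · exact hfm.2 h
      rw [hMdef]
      unfold stepM
      rw [if_neg hns]
    have hkerrow : ∀ a ∈ Kf, ∀ b ∈ Kf, M (Sum.inl a) (Sum.inl b) = K (Sum.inl a) (Sum.inl b) := by
      intro a ha b hb
      have haK : a ∈ H.kernel := by
        simpa only [hKfdef, Finset.mem_filter, Finset.mem_univ, true_and] using ha
      have hbK : b ∈ H.kernel := by
        simpa only [hKfdef, Finset.mem_filter, Finset.mem_univ, true_and] using hb
      rw [hMdef, hKdef, stepM_sink_kernel H N haK, Kext_inl_inl]
      unfold VisitSub.kerM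
      by_cases h : H.arcs a b
      · rw [if_pos h, if_pos ⟨haK, hbK, h⟩]
      · rw [if_neg h, if_neg (fun hc => h hc.2.2)]
    have hfrontrow : ∀ f ∈ Ff, ∑ k ∈ Kf, M (Sum.inl f) (Sum.inl k) ≤ nH / N := by
      intro f hf
      have hfm : f ∈ H.verts \ H.kernel := by
        simpa only [hFfdef, Finset.mem_filter, Finset.mem_univ, true_and] using hf
      have hout : N ≤ outDeg (sinkExt H N) (Sum.inl f) := outDeg_sink_frontier H N hfm
      have hent : ∀ k, M (Sum.inl f) (Sum.inl k) ≤ 1 / (N:ℝ) := by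
        intro k
        rw [hMdef]
        unfold stepM
        split
        · exact one_div_le_one_div_of_le hN0 (by exact_mod_cast hout)
        · positivity
      calc ∑ k ∈ Kf, M (Sum.inl f) (Sum.inl k) ≤ ∑ _k ∈ Kf, 1/(N:ℝ) :=
            Finset.sum_le_sum fun k _ => hent k
        _ = (Kf.card : ℝ) * (1/(N:ℝ)) := by rw [Finset.sum_const, nsmul_eq_mul]
        _ ≤ nH * (1/(N:ℝ)) := mul_le_mul_of_nonneg_right hKfcard (by positivity)
        _ = nH / N := by ring
    have hstep : ∀ τ (b : V), cM (τ+1) (Sum.inl b)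
        = ∑ a ∈ Kf, cM τ (Sum.inl a) * M (Sum.inl a) (Sum.inl b)
          + ∑ a ∈ Ff, cM τ (Sum.inl a) * M (Sum.inl a) (Sum.inl b) := by
      intro τ b
      rw [hrecM, hredM]
      exact sum_split hdisj (fun a haK haF => by rw [hMvanish a b haK haF, mul_zero])
    have hstepK : ∀ τ (b : V), cK (τ+1) (Sum.inl b)
        = ∑ a ∈ Kf, cK τ (Sum.inl a) * K (Sum.inl a) (Sum.inl b) := by
      intro τ b
      rw [hrecK, hredK]
      refine (Finset.sum_subset (Finset.subset_univ Kf) ?_).symm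
      intro a _ haK
      rw [hKvanish a _ haK, mul_zero]
    set Sm : ℕ → ℝ := fun τ => ∑ k ∈ Kf, cM τ (Sum.inl k) with hSmdef
    set Tm : ℕ → ℝ := fun τ => ∑ f ∈ Ff, cM τ (Sum.inl f) with hTmdef
    set Dm : ℕ → ℝ := fun τ => ∑ k ∈ Kf, (cM τ (Sum.inl k) - cK τ (Sum.inl k)) with hDmdef
    set q : ℝ := nH / N with hqdef
    have hq0 : 0 ≤ q := by rw [hqdef]; positivity
    have hDm0 : ∀ τ, 0 ≤ Dm τ := fun τ =>
      Finset.sum_nonneg fun k _ => sub_nonneg.2 (hcMK τ _)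
    have hSrec : ∀ τ, Sm (τ+1) ≤ Sm τ + Tm τ * q := by
      intro τ
      simp only [hSmdef]
      calc ∑ k ∈ Kf, cM (τ+1) (Sum.inl k)
          = ∑ k ∈ Kf, (∑ a ∈ Kf, cM τ (Sum.inl a) * M (Sum.inl a) (Sum.inl k)
              + ∑ a ∈ Ff, cM τ (Sum.inl a) * M (Sum.inl a) (Sum.inl k)) :=
            Finset.sum_congr rfl fun k _ => hstep τ k
        _ = ∑ a ∈ Kf, cM τ (Sum.inl a) * ∑ k ∈ Kf, M (Sum.inl a) (Sum.inl k)
              + ∑ a ∈ Ff, cM τ (Sum.inl a) * ∑ k ∈ Kf, M (Sum.inl a) (Sum.inl k) := by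
            rw [Finset.sum_add_distrib, Finset.sum_comm, Finset.sum_comm (s := Kf) (t := Ff)]
            congr 1 <;> exact Finset.sum_congr rfl fun a _ => (Finset.mul_sum _ _ _).symm
        _ ≤ ∑ a ∈ Kf, cM τ (Sum.inl a) * 1 + ∑ a ∈ Ff, cM τ (Sum.inl a) * (nH/N) := by
            apply add_le_add
            · exact Finset.sum_le_sum fun a _ => mul_le_mul_of_nonneg_left
                (sum_inl_le_one hM0 hM1 Kf (Sum.inl a)) (hcM0 τ _)
            · exact Finset.sum_le_sum fun a ha => mul_le_mul_of_nonneg_left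
                (hfrontrow a ha) (hcM0 τ _)
        _ = Sm τ + Tm τ * q := by
            simp only [mul_one, hSmdef, hTmdef, hqdef, Finset.sum_mul]
    have hTrec : ∀ τ, Tm (τ+1) ≤ Sm τ := by
      intro τ
      simp only [hTmdef]
      calc ∑ f ∈ Ff, cM (τ+1) (Sum.inl f)
          = ∑ f ∈ Ff, ∑ a ∈ Kf, cM τ (Sum.inl a) * M (Sum.inl a) (Sum.inl f) := by
            refine Finset.sum_congr rfl fun f hf => ?_
            rw [hstep τ f]
            have : ∑ a ∈ Ff, cM τ (Sum.inl a) * M (Sum.inl a) (Sum.inl f) = 0 := by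
              apply Finset.sum_eq_zero
              intro a ha
              rw [hMfront a f hf (Finset.disjoint_right.1 hdisj ha), mul_zero]
            rw [this, add_zero]
        _ = ∑ a ∈ Kf, cM τ (Sum.inl a) * ∑ f ∈ Ff, M (Sum.inl a) (Sum.inl f) := by
            rw [Finset.sum_comm]
            exact Finset.sum_congr rfl fun a _ => (Finset.mul_sum _ _ _).symm
        _ ≤ ∑ a ∈ Kf, cM τ (Sum.inl a) * 1 :=
            Finset.sum_le_sum fun a _ => mul_le_mul_of_nonneg_left
              (sum_inl_le_one hM0 hM1 Ff (Sum.inl a)) (hcM0 τ _)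
        _ = Sm τ := by simp [hSmdef]
    have hDrec : ∀ τ, Dm (τ+1) ≤ Dm τ + Tm τ * q := by
      intro τ
      simp only [hDmdef]
      calc ∑ k ∈ Kf, (cM (τ+1) (Sum.inl k) - cK (τ+1) (Sum.inl k))
          = ∑ k ∈ Kf, (∑ a ∈ Kf, (cM τ (Sum.inl a) - cK τ (Sum.inl a)) * M (Sum.inl a) (Sum.inl k)
              + ∑ a ∈ Ff, cM τ (Sum.inl a) * M (Sum.inl a) (Sum.inl k)) := by
            refine Finset.sum_congr rfl fun k hk => ?_
            have hMK : ∑ a ∈ Kf, cK τ (Sum.inl a) * K (Sum.inl a) (Sum.inl k)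
                = ∑ a ∈ Kf, cK τ (Sum.inl a) * M (Sum.inl a) (Sum.inl k) :=
              Finset.sum_congr rfl fun a ha => by rw [hkerrow a ha k hk]
            have h2 : ∑ a ∈ Kf, (cM τ (Sum.inl a) - cK τ (Sum.inl a)) * M (Sum.inl a) (Sum.inl k)
                = ∑ a ∈ Kf, cM τ (Sum.inl a) * M (Sum.inl a) (Sum.inl k)
                  - ∑ a ∈ Kf, cK τ (Sum.inl a) * M (Sum.inl a) (Sum.inl k) := by
              rw [← Finset.sum_sub_distrib]
              exact Finset.sum_congr rfl fun a _ => by ring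
            rw [hstep τ k, hstepK τ k, hMK, h2]
            ring
        _ = ∑ a ∈ Kf, (cM τ (Sum.inl a) - cK τ (Sum.inl a)) * ∑ k ∈ Kf, M (Sum.inl a) (Sum.inl k)
              + ∑ a ∈ Ff, cM τ (Sum.inl a) * ∑ k ∈ Kf, M (Sum.inl a) (Sum.inl k) := by
            rw [Finset.sum_add_distrib, Finset.sum_comm, Finset.sum_comm (s := Kf) (t := Ff)]
            congr 1 <;> exact Finset.sum_congr rfl fun a _ => (Finset.mul_sum _ _ _).symm
        _ ≤ ∑ a ∈ Kf, (cM τ (Sum.inl a) - cK τ (Sum.inl a)) * 1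
              + ∑ a ∈ Ff, cM τ (Sum.inl a) * (nH/N) := by
            apply add_le_add
            · exact Finset.sum_le_sum fun a _ => mul_le_mul_of_nonneg_left
                (sum_inl_le_one hM0 hM1 Kf (Sum.inl a)) (sub_nonneg.2 (hcMK τ _))
            · exact Finset.sum_le_sum fun a ha => mul_le_mul_of_nonneg_left
                (hfrontrow a ha) (hcM0 τ _)
        _ = Dm τ + Tm τ * q := by
            simp only [mul_one, hDmdef, hTmdef, hqdef, Finset.sum_mul]
    have hST : ∀ τ, Sm τ ≤ nH * (1+q)^τ ∧ Tm τ ≤ nH * (1+q)^τ := by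
      intro τ
      induction τ with
      | zero =>
        constructor
        · have : Sm 0 = (Kf.card : ℝ) := by
            simp only [hSmdef]
            rw [Finset.sum_congr rfl fun k _ => hcMzero (Sum.inl k)]
            simp
          rw [this]; simpa using hKfcard
        · have : Tm 0 = (Ff.card : ℝ) := by
            simp only [hTmdef]
            rw [Finset.sum_congr rfl fun k _ => hcMzero (Sum.inl k)]
            simp
          rw [this]; simpa using hFfcard
      | succ τ ih =>
        have hpowq : (1+q)^τ ≤ (1+q)^(τ+1) :=
          pow_le_pow_right₀ (by linarith) (Nat.le_succ τ)
        constructor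
        · calc Sm (τ+1) ≤ Sm τ + Tm τ * q := hSrec τ
            _ ≤ nH * (1+q)^τ + nH * (1+q)^τ * q :=
                add_le_add ih.1 (mul_le_mul_of_nonneg_right ih.2 hq0)
            _ = nH * (1+q)^(τ+1) := by ring
        · calc Tm (τ+1) ≤ Sm τ := hTrec τ
            _ ≤ nH * (1+q)^τ := ih.1
            _ ≤ nH * (1+q)^(τ+1) := mul_le_mul_of_nonneg_left hpowq hnH0.le
    have hDmzero : Dm 0 = 0 := by
      simp only [hDmdef]
      apply Finset.sum_eq_zero
      intro k _
      rw [hcMzero, hcKzero, sub_self]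
    have hD : ∀ τ, Dm τ ≤ q * nH * τ * (1+q)^τ := by
      intro τ
      induction τ with
      | zero => simp [hDmzero]
      | succ τ ih =>
        have hpowq : (1+q)^τ ≤ (1+q)^(τ+1) :=
          pow_le_pow_right₀ (by linarith) (Nat.le_succ τ)
        calc Dm (τ+1) ≤ Dm τ + Tm τ * q := hDrec τ
          _ ≤ q * nH * τ * (1+q)^τ + nH * (1+q)^τ * q :=
              add_le_add ih (mul_le_mul_of_nonneg_right (hST τ).2 hq0)
          _ = q * nH * ((τ:ℝ)+1) * (1+q)^τ := by ring
          _ ≤ q * nH * ((τ:ℝ)+1) * (1+q)^(τ+1) := by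
              apply mul_le_mul_of_nonneg_left hpowq
              positivity
          _ = q * nH * ((τ+1 : ℕ):ℝ) * (1+q)^(τ+1) := by push_cast; ring
    have hαq : α * (1 + q) ≤ β := by rw [hqdef]; exact hNA
    have hDα : ∀ τ : ℕ, α ^ τ * Dm τ ≤ q * nH * ((τ:ℝ) * β ^ τ) := by
      intro τ
      calc α ^ τ * Dm τ ≤ α ^ τ * (q * nH * τ * (1+q)^τ) :=
            mul_le_mul_of_nonneg_left (hD τ) (pow_nonneg hα0.le τ)
        _ = q * nH * ((τ:ℝ) * (α * (1+q))^τ) := by rw [mul_pow]; ring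
        _ ≤ q * nH * ((τ:ℝ) * β ^ τ) := by
            apply mul_le_mul_of_nonneg_left ?_ (by positivity)
            apply mul_le_mul_of_nonneg_left ?_ (Nat.cast_nonneg τ)
            exact pow_le_pow_left₀ (by positivity) hαq τ
    set n' : ℝ := (Fintype.card (V ⊕ Fin N) : ℝ) with hn'def
    have hn'0 : (0:ℝ) < n' := by
      rw [hn'def]; exact_mod_cast Fintype.card_pos
    have hcMcard : ∀ τ w, cM τ w ≤ n' := by
      intro τ w
      rw [hn'def]
      calc cM τ w ≤ ∑ _z : V ⊕ Fin N, (1:ℝ) :=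
            Finset.sum_le_sum fun z _ => hMple1 τ z w
        _ = (Fintype.card (V ⊕ Fin N) : ℝ) := by
            rw [Finset.sum_const, nsmul_eq_mul, mul_one, Finset.card_univ]
    have hsumM : ∀ w, Summable fun τ : ℕ => α ^ τ * cM τ w := by
      intro w
      apply Summable.of_nonneg_of_le
        (fun τ => mul_nonneg (pow_nonneg hα0.le τ) (hcM0 τ w)) (fun τ => ?_)
        ((summable_geometric_of_lt_one hα0.le hα1).mul_left n')
      calc α ^ τ * cM τ w ≤ α ^ τ * n' :=
            mul_le_mul_of_nonneg_left (hcMcard τ w) (pow_nonneg hα0.le τ)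
        _ = n' * α ^ τ := mul_comm _ _
    have hsumK : ∀ w, Summable fun τ : ℕ => α ^ τ * cK τ w := by
      intro w
      apply Summable.of_nonneg_of_le
        (fun τ => mul_nonneg (pow_nonneg hα0.le τ)
          (Finset.sum_nonneg fun z _ => pow_entry_nonneg hK0 τ z w))
        (fun τ => mul_le_mul_of_nonneg_left (hcMK τ w) (pow_nonneg hα0.le τ)) (hsumM w)
    have hsumD : Summable fun τ : ℕ => α ^ τ * Dm τ := by
      apply Summable.of_nonneg_of_le
        (fun τ => mul_nonneg (pow_nonneg hα0.le τ) (hDm0 τ)) hDα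
        (hCsum.mul_left (q * nH))
    have htsumD : ∑' τ : ℕ, α ^ τ * Dm τ ≤ q * nH * C := by
      calc ∑' τ : ℕ, α ^ τ * Dm τ ≤ ∑' τ : ℕ, q * nH * ((τ:ℝ) * β ^ τ) :=
            Summable.tsum_le_tsum hDα hsumD (hCsum.mul_left (q * nH))
        _ = q * nH * C := by rw [tsum_mul_left, hCdef]
    have hpr : ∀ w, pagerank α (sinkExt H N) w
        = (1-α)/n' * ∑' τ : ℕ, α ^ τ * cM τ w := by
      intro w
      rw [hn'def, hcM, hMdef]
      rfl
    have hcKkerM : ∀ (b : V) (τ : ℕ), cK τ (Sum.inl b) = ∑ z : V, (H.kerM ^ τ) z b := by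
      intro b τ
      simp only [hcK, hKdef]
      rw [Fintype.sum_sum_type]
      have h2 : ∀ s : Fin N, (Kext H N ^ τ) (Sum.inr s) (Sum.inl b) = 0 :=
        fun s => Kext_pow_inr H N τ s b
      rw [Finset.sum_congr rfl fun s _ => h2 s, Finset.sum_const_zero, add_zero]
      exact Finset.sum_congr rfl fun a _ => Kext_pow_inl H N τ a b
    have hks : ∀ w : V, H.kernelScore α w
        = (1-α)/nH * ∑' τ : ℕ, α ^ τ * cK τ (Sum.inl w) := by
      intro w
      unfold VisitSub.kernelScore VisitSub.kernelContrib
      rw [← Finset.mul_sum, ← hnHdef]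
      congr 1
      rw [← Summable.tsum_finsetSum (fun z _ => summable_entry_aux (kerM_nonneg H) (kerM_rowsum_le H) hα0 hα1 z w)]
      apply tsum_congr
      intro τ
      rw [hcKkerM w τ, Finset.mul_sum]
    set XU : ℝ := ∑' τ : ℕ, α ^ τ * cK τ (Sum.inl u) with hXUdef
    set XV : ℝ := ∑' τ : ℕ, α ^ τ * cK τ (Sum.inl v) with hXVdef
    have hksu : H.kernelScore α u = (1-α)/nH * XU := hks u
    have hksv : H.kernelScore α v = (1-α)/nH * XV := hks v
    have hu' : u ∈ Kf := by
      simp only [hKfdef, Finset.mem_filter, Finset.mem_univ, true_and]; exact hu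
    have hDterm : ∀ τ, cM τ (Sum.inl u) ≤ cK τ (Sum.inl u) + Dm τ := by
      intro τ
      have h2 : cM τ (Sum.inl u) - cK τ (Sum.inl u) ≤ Dm τ := by
        rw [hDmdef]
        exact Finset.single_le_sum
          (f := fun k => cM τ (Sum.inl k) - cK τ (Sum.inl k))
          (fun k _ => sub_nonneg.2 (hcMK τ _)) hu'
      linarith
    have hUB : pagerank α (sinkExt H N) (Sum.inl u) ≤ (1-α)/n' * (XU + q*nH*C) := by
      rw [hpr (Sum.inl u)]
      apply mul_le_mul_of_nonneg_left ?_ (by positivity)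
      calc ∑' τ : ℕ, α ^ τ * cM τ (Sum.inl u)
          ≤ ∑' τ : ℕ, (α ^ τ * cK τ (Sum.inl u) + α ^ τ * Dm τ) := by
            apply Summable.tsum_le_tsum ?_ (hsumM _) ((hsumK _).add hsumD)
            intro τ
            calc α ^ τ * cM τ (Sum.inl u)
                ≤ α ^ τ * (cK τ (Sum.inl u) + Dm τ) :=
                  mul_le_mul_of_nonneg_left (hDterm τ) (pow_nonneg hα0.le τ)
              _ = α ^ τ * cK τ (Sum.inl u) + α ^ τ * Dm τ := mul_add _ _ _
        _ = XU + ∑' τ : ℕ, α ^ τ * Dm τ := by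
            rw [Summable.tsum_add (hsumK _) hsumD, hXUdef]
        _ ≤ XU + q*nH*C := add_le_add_right htsumD _
    have hLB : (1-α)/n' * XV ≤ pagerank α (sinkExt H N) (Sum.inl v) := by
      rw [hpr (Sum.inl v)]
      apply mul_le_mul_of_nonneg_left ?_ (by positivity)
      exact Summable.tsum_le_tsum
        (fun τ => mul_le_mul_of_nonneg_left (hcMK τ _) (pow_nonneg hα0.le τ))
        (hsumK _) (hsumM _)
    have hkey : (1+ε) * (XU + q*nH*C) < XV := by
      have h1 : XV - (1+ε)*XU = nH * δ / (1-α) := by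
        rw [hδdef, hksu, hksv]
        field_simp
      have h2 : (1+ε)*(q*nH*C) = ((1+ε)*(1-α)*nH*C/N) * (nH/(1-α)) := by
        rw [hqdef]
        field_simp
      have h3 : ((1+ε)*(1-α)*nH*C/N) * (nH/(1-α)) < δ * (nH/(1-α)) :=
        mul_lt_mul_of_pos_right hNB (by positivity)
      have h4 : δ * (nH/(1-α)) = nH * δ / (1-α) := by ring
      nlinarith [h1, h2, h3, h4]
    calc (1 + ε) * pagerank α (sinkExt H N) (Sum.inl u)
        ≤ (1 + ε) * ((1-α)/n' * (XU + q*nH*C)) :=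
          mul_le_mul_of_nonneg_left hUB hε1.le
      _ = (1-α)/n' * ((1+ε) * (XU + q*nH*C)) := by ring
      _ < (1-α)/n' * XV := by
          apply mul_lt_mul_of_pos_left hkey
          positivity
      _ ≤ pagerank α (sinkExt H N) (Sum.inl v) := hLB
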